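/- Let μ_1 be a locally translation invariant probability measure on {0,1}^2, written as μ_1 = c_0 π_1ν_{C_0} + c_1 π_1ν_{C_1} + c_2 π_1ν_{C_2} with c_i ≥ 0, ∑c_i = 1, where C_0, C_1 are the loops at vertices 0, 1 of G_1 and C_2 is the 2-cycle. If L = 2ℓ+1 is odd with L ≥ 2, then μ_1 has a translation-invariant extension to {0,1}^{ℤ_L} if and only if c_2 ≤ 1 − 1/L. -/

import Mathlib

/-- `μ` (a measure on `{0,1}^{k+1}`) extends to a translation-invariant probability
measure on configurations on the ring `ℤ_L` with `L` sites: the cyclic translation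
is `finRotate L`, and the marginal on any `k+1` cyclically consecutive sites equals
`μ`. -/
def ExtendsToRing (k L : ℕ) (μ : (Fin (k + 1) → Bool) → ℝ) : Prop :=
  ∃ ν : (Fin L → Bool) → ℝ, (∀ x, 0 ≤ ν x) ∧ (∑ x, ν x) = 1 ∧
    (∀ x, ν (x ∘ finRotate L) = ν x) ∧
    ∀ a : Fin L, ∀ ζ : Fin (k + 1) → Bool,
      (∑ x : Fin L → Bool,
        if (∀ t : Fin (k + 1), x ((finRotate L)^[t] a) = ζ t) then ν x else 0) = μ ζ

open Finset
open scoped Fin.CommRing Fin.NatCast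

lemma sum_range_two_mul (u w : ℝ) (n : ℕ) :
    (∑ i ∈ Finset.range (2*n), if i % 2 = 0 then u else w) = n * (u + w) := by
  induction n with
  | zero => simp
  | succ n ih =>
    have h : 2 * (n+1) = (2*n) + 1 + 1 := by ring
    rw [h, Finset.sum_range_succ, Finset.sum_range_succ, ih,
        if_pos (by omega : (2*n) % 2 = 0), if_neg (by omega : ¬ (2*n+1) % 2 = 0)]
    push_cast
    ring

def pat (ℓ : ℕ) : Fin (2*ℓ+1) → Bool := fun i => decide ((i : ℕ) % 2 = 1)

lemma count_pat (ℓ : ℕ) (b c : Bool) :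
    (∑ m : Fin (2*ℓ+1), if pat ℓ m = b ∧ pat ℓ (m+1) = c then (1:ℝ) else 0)
    = (if b = false ∧ c = false then 1 else 0) + (if b ≠ c then (ℓ:ℝ) else 0) := by
  rw [Fin.sum_univ_castSucc]
  have hlast : pat ℓ (Fin.last (2*ℓ)) = false := by
    simp [pat, Nat.mul_mod_right]
  have hlast1 : pat ℓ (Fin.last (2*ℓ) + 1) = false := by
    rw [Fin.last_add_one]
    simp [pat]
  have hcs : ∀ i : Fin (2*ℓ),
      (if pat ℓ i.castSucc = b ∧ pat ℓ (i.castSucc + 1) = c then (1:ℝ) else 0)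
      = (fun n : ℕ => if (decide (n % 2 = 1) = b ∧ decide ((n+1) % 2 = 1) = c)
          then (1:ℝ) else 0) (i : ℕ) := by
    intro i
    simp [pat, Fin.coeSucc_eq_succ]
  rw [Finset.sum_congr rfl (fun i _ => hcs i),
      Fin.sum_univ_eq_sum_range (fun n : ℕ => if (decide (n % 2 = 1) = b ∧ decide ((n+1) % 2 = 1) = c) then (1:ℝ) else 0) (2*ℓ)]
  have hre : ∀ n ∈ Finset.range (2*ℓ),
      (if (decide (n % 2 = 1) = b ∧ decide ((n+1) % 2 = 1) = c) then (1:ℝ) else 0)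
      = (if n % 2 = 0 then (if (false = b ∧ true = c) then (1:ℝ) else 0)
         else (if (true = b ∧ false = c) then (1:ℝ) else 0)) := by
    intro n _
    rcases Nat.even_or_odd n with h | h
    · have h1 : n % 2 = 0 := Nat.even_iff.mp h
      have h2 : (n+1) % 2 = 1 := by omega
      simp [h1, h2]
    · have h1 : n % 2 = 1 := Nat.odd_iff.mp h
      have h2 : (n+1) % 2 = 0 := by omega
      simp [h1, h2]
  rw [Finset.sum_congr rfl hre, sum_range_two_mul, hlast, hlast1]
  cases b <;> cases c <;> norm_num

lemma sum_if_eq {α : Type*} [Fintype α] [DecidableEq α]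
    (v : α) (C : α → Prop) [DecidablePred C] (r : ℝ) :
    (∑ x : α, if C x then (if x = v then r else 0) else 0) = if C v then r else 0 := by
  have h : ∀ x : α, (if C x then (if x = v then r else 0) else 0)
      = (if x = v then (if C x then r else 0) else 0) := by
    intro x; split_ifs <;> simp_all
  rw [Finset.sum_congr rfl (fun x _ => h x), Finset.sum_ite_eq' Finset.univ v]
  simp

lemma sum_delta {α : Type*} [Fintype α] [DecidableEq α] (v : α) (r : ℝ) :
    (∑ x : α, if x = v then r else 0) = r := by
  rw [Finset.sum_ite_eq' Finset.univ v]
  simp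

lemma sum_if_scaled {α : Type*} [Fintype α] [DecidableEq α]
    (v : α) (C : α → Prop) [DecidablePred C] (r : ℝ) :
    (∑ x : α, if C x then r * (if x = v then (1:ℝ) else 0) else 0) = if C v then r else 0 := by
  have h : ∀ x : α, (if C x then r * (if x = v then (1:ℝ) else 0) else 0)
      = (if C x then (if x = v then r else 0) else 0) := by
    intro x; split_ifs <;> simp
  rw [Finset.sum_congr rfl (fun x _ => h x)]
  exact sum_if_eq v C r

lemma sum_if_orbit {α ι : Type*} [Fintype α] [DecidableEq α] [Fintype ι]
    (q : ι → α) (C : α → Prop) [DecidablePred C] (r : ℝ) :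
    (∑ x : α, if C x then r * (∑ j : ι, if x = q j then (1:ℝ) else 0) else 0)
    = r * ∑ j : ι, (if C (q j) then (1:ℝ) else 0) := by
  have h : ∀ x : α, (if C x then r * (∑ j : ι, if x = q j then (1:ℝ) else 0) else 0)
      = ∑ j : ι, (if C x then (if x = q j then r else 0) else 0) := by
    intro x
    split_ifs with hc
    · rw [Finset.mul_sum]
      exact Finset.sum_congr rfl fun j _ => by split_ifs <;> simp
    · simp
  rw [Finset.sum_congr rfl (fun x _ => h x), Finset.sum_comm,
      Finset.sum_congr rfl (fun j _ => sum_if_eq (q j) C r), Finset.mul_sum]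
  exact Finset.sum_congr rfl fun j _ => by split_ifs <;> simp

def qcfg (ℓ : ℕ) (s : Bool) (j : Fin (2*ℓ+1)) : Fin (2*ℓ+1) → Bool :=
  fun i => xor s (pat ℓ (i+j))

lemma qcfg_rot (ℓ : ℕ) (s : Bool) (j : Fin (2*ℓ+1)) (x : Fin (2*ℓ+1) → Bool) :
    (x ∘ finRotate (2*ℓ+1) = qcfg ℓ s j) ↔ x = qcfg ℓ s (j - 1) := by
  constructor
  · intro h; funext i
    have h1 := congrFun h (i - 1)
    simp only [Function.comp_apply, finRotate_succ_apply, sub_add_cancel] at h1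
    rw [h1]
    show xor s (pat ℓ (i - 1 + j)) = xor s (pat ℓ (i + (j - 1)))
    congr 1
    ring_nf
  · intro h; funext i
    simp only [Function.comp_apply, finRotate_succ_apply, h]
    show xor s (pat ℓ (i + 1 + (j - 1))) = xor s (pat ℓ (i + j))
    congr 1
    ring_nf

lemma exists_no_wall (ℓ : ℕ) (x : Fin (2*ℓ+1) → Bool) : ∃ m, x m = x (m+1) := by
  by_contra hc
  push_neg at hc
  have hstep : ∀ n : ℕ, x ((n : Fin (2*ℓ+1))) = (if n % 2 = 0 then x 0 else !(x 0)) := by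
    intro n
    induction n with
    | zero => simp
    | succ n ih =>
      have hcast : ((n+1 : ℕ) : Fin (2*ℓ+1)) = ((n:ℕ) : Fin (2*ℓ+1)) + 1 := by
        push_cast; ring
      have hne := hc ((n : ℕ) : Fin (2*ℓ+1))
      have hflip : x (((n:ℕ) : Fin (2*ℓ+1)) + 1) = !(x ((n:ℕ) : Fin (2*ℓ+1))) := by
        revert hne
        cases hx : x (((n:ℕ):Fin (2*ℓ+1)) + 1) <;> cases hy : x ((n:ℕ):Fin (2*ℓ+1)) <;> simp
      rw [hcast, hflip, ih]
      rcases Nat.even_or_odd n with he | ho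
      · have h1 : n % 2 = 0 := Nat.even_iff.mp he
        have h2 : ¬((n+1) % 2 = 0) := by omega
        simp [h1, h2]
      · have h1 : ¬(n % 2 = 0) := by
          have := Nat.odd_iff.mp ho; omega
        have h2 : (n+1) % 2 = 0 := by
          have := Nat.odd_iff.mp ho; omega
        simp [h1, h2]
  have h1 := hstep (2*ℓ+1)
  rw [Fin.natCast_self] at h1
  have h2 : ¬((2*ℓ+1) % 2 = 0) := by omega
  rw [if_neg h2] at h1
  exact absurd h1 (by simp)

/-- An LTI measure `μ_1 = c_0 π_1ν_{C_0} + c_1 π_1ν_{C_1} + c_2 π_1ν_{C_2}` on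
`{0,1}^2` (where `C_0, C_1` are the loops at `0`, `1` of `G_1` and `C_2` is the
2-cycle) extends to a TI measure on the ring with an odd number `L ≥ 2` of sites
iff `c_2 ≤ 1 - 1/L`. -/
theorem stmt16 (c₀ c₁ c₂ : ℝ) (h₀ : 0 ≤ c₀) (h₁ : 0 ≤ c₁) (h₂ : 0 ≤ c₂)
    (hsum : c₀ + c₁ + c₂ = 1) (μ : (Fin 2 → Bool) → ℝ)
    (hμ : ∀ η : Fin 2 → Bool,
      μ η = c₀ * (if η 0 = false ∧ η 1 = false then 1 else 0)
          + c₁ * (if η 0 = true ∧ η 1 = true then 1 else 0)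
          + c₂ * (if η 0 ≠ η 1 then 1 / 2 else 0))
    (L ℓ : ℕ) (hodd : L = 2 * ℓ + 1) (hL : 2 ≤ L) :
    ExtendsToRing 1 L μ ↔ c₂ ≤ 1 - 1 / (L : ℝ) := by
  subst hodd
  have hℓ : 1 ≤ ℓ := by omega
  have hℓR : (1:ℝ) ≤ (ℓ:ℝ) := by exact_mod_cast hℓ
  have hLR : ((2*ℓ+1 : ℕ) : ℝ) = 2*(ℓ:ℝ)+1 := by push_cast; ring
  have hLpos : (0:ℝ) < 2*(ℓ:ℝ)+1 := by linarith
  have hcond : ∀ (x : Fin (2*ℓ+1) → Bool) (a : Fin (2*ℓ+1)) (ζ : Fin 2 → Bool),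
      (∀ t : Fin 2, x ((finRotate (2*ℓ+1))^[t] a) = ζ t) ↔ (x a = ζ 0 ∧ x (a+1) = ζ 1) := by
    intro x a ζ
    rw [Fin.forall_fin_two]
    simp [finRotate_succ_apply]
  constructor
  · rintro ⟨ν, hpos, htot, -, hmarg⟩
    have hmarg2 : ∀ a : Fin (2*ℓ+1), ∀ ζ : Fin 2 → Bool,
        (∑ x : Fin (2*ℓ+1) → Bool, if (x a = ζ 0 ∧ x (a+1) = ζ 1) then ν x else 0) = μ ζ := by
      intro a ζ
      rw [← hmarg a ζ]
      exact Finset.sum_congr rfl fun x _ => if_congr (hcond x a ζ).symm rfl rfl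
    have hwall : ∀ a : Fin (2*ℓ+1),
        (∑ x : Fin (2*ℓ+1) → Bool, if x a ≠ x (a+1) then ν x else 0) = c₂ := by
      intro a
      have e1 := hmarg2 a ![false, true]
      have e2 := hmarg2 a ![true, false]
      rw [hμ] at e1 e2
      simp only [Matrix.cons_val_zero, Matrix.cons_val_one, Matrix.head_cons] at e1 e2
      norm_num at e1 e2
      have key : ∀ x : Fin (2*ℓ+1) → Bool,
          (if x a ≠ x (a+1) then ν x else 0)
          = (if (x a = false ∧ x (a+1) = true) then ν x else 0)
            + (if (x a = true ∧ x (a+1) = false) then ν x else 0) := by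
        intro x
        cases hxa : x a <;> cases hxb : x (a+1) <;> simp [hxa, hxb]
      rw [Finset.sum_congr rfl (fun x _ => key x), Finset.sum_add_distrib]
      exact (congrArg₂ (· + ·) e1 e2).trans (by ring)
    have hW : ∀ x : Fin (2*ℓ+1) → Bool,
        (∑ m : Fin (2*ℓ+1), if x m ≠ x (m+1) then (1:ℝ) else 0) ≤ 2*(ℓ:ℝ) := by
      intro x
      obtain ⟨m₀, hm₀⟩ := exists_no_wall ℓ x
      rw [← Finset.sum_erase_add _ _ (Finset.mem_univ m₀), if_neg (by simp [hm₀]), add_zero]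
      calc (∑ m ∈ Finset.univ.erase m₀, if x m ≠ x (m+1) then (1:ℝ) else 0)
          ≤ ∑ m ∈ Finset.univ.erase m₀, (1:ℝ) :=
            Finset.sum_le_sum (fun i _ => by split <;> norm_num)
        _ = ((Finset.univ.erase m₀).card : ℝ) := by simp
        _ = 2*(ℓ:ℝ) := by
            rw [Finset.card_erase_of_mem (Finset.mem_univ _), Finset.card_univ, Fintype.card_fin]
            push_cast; ring
    have main : (2*(ℓ:ℝ)+1) * c₂ ≤ 2*(ℓ:ℝ) := by
      have lhs : (∑ m : Fin (2*ℓ+1), ∑ x : Fin (2*ℓ+1) → Bool,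
          if x m ≠ x (m+1) then ν x else 0) = (2*(ℓ:ℝ)+1) * c₂ := by
        rw [Finset.sum_congr rfl (fun m _ => hwall m), Finset.sum_const, Finset.card_univ,
            Fintype.card_fin, nsmul_eq_mul]
        push_cast; ring
      rw [← lhs, Finset.sum_comm]
      have each : ∀ x : Fin (2*ℓ+1) → Bool,
          (∑ m : Fin (2*ℓ+1), if x m ≠ x (m+1) then ν x else 0) ≤ ν x * (2*(ℓ:ℝ)) := by
        intro x
        have hrw : (∑ m : Fin (2*ℓ+1), if x m ≠ x (m+1) then ν x else 0)
            = ν x * (∑ m : Fin (2*ℓ+1), if x m ≠ x (m+1) then (1:ℝ) else 0) := by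
          rw [Finset.mul_sum]
          exact Finset.sum_congr rfl fun m _ => by split <;> simp
        rw [hrw]
        exact mul_le_mul_of_nonneg_left (hW x) (hpos x)
      calc (∑ x : Fin (2*ℓ+1) → Bool, ∑ m : Fin (2*ℓ+1), if x m ≠ x (m+1) then ν x else 0)
          ≤ ∑ x : Fin (2*ℓ+1) → Bool, ν x * (2*(ℓ:ℝ)) := Finset.sum_le_sum fun x _ => each x
        _ = (∑ x : Fin (2*ℓ+1) → Bool, ν x) * (2*(ℓ:ℝ)) := by rw [Finset.sum_mul]
        _ = 2*(ℓ:ℝ) := by rw [htot, one_mul]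
    rw [hLR]
    have hrw : 1 - 1/(2*(ℓ:ℝ)+1) = (2*(ℓ:ℝ))/(2*(ℓ:ℝ)+1) := by field_simp; ring
    rw [hrw, le_div_iff₀ hLpos]
    linarith
  · intro hcle
    rw [hLR] at hcle
    have hA : (2*(ℓ:ℝ)+1) * c₂ ≤ 2*(ℓ:ℝ) := by
      have h1 : (2*(ℓ:ℝ)+1) * (1/(2*(ℓ:ℝ)+1)) = 1 := by field_simp
      nlinarith [hcle, hLpos]
    have hspos : (0:ℝ) < c₀ + c₁ := by nlinarith
    set s : ℝ := c₀ + c₁ with hsdef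
    have hsne : s ≠ 0 := ne_of_gt hspos
    have hℓne : (ℓ:ℝ) ≠ 0 := by positivity
    have hLne : (2*(ℓ:ℝ)+1) ≠ 0 := ne_of_gt hLpos
    set b0 : ℝ := (2*(ℓ:ℝ)+1) * c₂ * c₀ / (2*ℓ*s) with hb0def
    set b1 : ℝ := (2*(ℓ:ℝ)+1) * c₂ * c₁ / (2*ℓ*s) with hb1def
    set a0 : ℝ := c₀ - b0/(2*(ℓ:ℝ)+1) with ha0def
    set a1 : ℝ := c₁ - b1/(2*(ℓ:ℝ)+1) with ha1def
    have hden : (0:ℝ) < 2*(ℓ:ℝ)*s := by positivity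
    have hb0n : 0 ≤ b0 := by
      rw [hb0def]
      exact div_nonneg (mul_nonneg (mul_nonneg (le_of_lt hLpos) h₂) h₀) (le_of_lt hden)
    have hb1n : 0 ≤ b1 := by
      rw [hb1def]
      exact div_nonneg (mul_nonneg (mul_nonneg (le_of_lt hLpos) h₂) h₁) (le_of_lt hden)
    have hkey : 0 ≤ 2*(ℓ:ℝ)*s - c₂ := by
      have : s = 1 - c₂ := by rw [hsdef]; linarith
      rw [this]; nlinarith
    have ha0n : 0 ≤ a0 := by
      have ha0eq : a0 = c₀ * (2*(ℓ:ℝ)*s - c₂) / (2*(ℓ:ℝ)*s) := by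
        rw [ha0def, hb0def]; field_simp
      rw [ha0eq]
      exact div_nonneg (mul_nonneg h₀ hkey) (le_of_lt hden)
    have ha1n : 0 ≤ a1 := by
      have ha1eq : a1 = c₁ * (2*(ℓ:ℝ)*s - c₂) / (2*(ℓ:ℝ)*s) := by
        rw [ha1def, hb1def]; field_simp
      rw [ha1eq]
      exact div_nonneg (mul_nonneg h₁ hkey) (le_of_lt hden)
    have hbsum : b0 + b1 = (2*(ℓ:ℝ)+1) * c₂ / (2*(ℓ:ℝ)) := by
      rw [hb0def, hb1def]
      field_simp
      ring
    refine ⟨fun x =>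
      a0 * (if x = (fun _ => false) then 1 else 0)
      + a1 * (if x = (fun _ => true) then 1 else 0)
      + (b0/(2*(ℓ:ℝ)+1)) * (∑ j : Fin (2*ℓ+1), if x = qcfg ℓ false j then 1 else 0)
      + (b1/(2*(ℓ:ℝ)+1)) * (∑ j : Fin (2*ℓ+1), if x = qcfg ℓ true j then 1 else 0),
      ?_, ?_, ?_, ?_⟩
    · intro x
      have ind : ∀ (P : Prop) [Decidable P], (0:ℝ) ≤ if P then 1 else 0 := by
        intro P _; split <;> norm_num
      have indsum : ∀ (q : Fin (2*ℓ+1) → Fin (2*ℓ+1) → Bool),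
          (0:ℝ) ≤ ∑ j : Fin (2*ℓ+1), if x = q j then 1 else 0 :=
        fun q => Finset.sum_nonneg fun j _ => ind _
      have hd0 : (0:ℝ) ≤ b0/(2*(ℓ:ℝ)+1) := div_nonneg hb0n (le_of_lt hLpos)
      have hd1 : (0:ℝ) ≤ b1/(2*(ℓ:ℝ)+1) := div_nonneg hb1n (le_of_lt hLpos)
      exact add_nonneg (add_nonneg (add_nonneg (mul_nonneg ha0n (ind _))
        (mul_nonneg ha1n (ind _))) (mul_nonneg hd0 (indsum _))) (mul_nonneg hd1 (indsum _))
    · have orbtot : ∀ sb : Bool,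
          (∑ x : Fin (2*ℓ+1) → Bool, ∑ j : Fin (2*ℓ+1), if x = qcfg ℓ sb j then (1:ℝ) else 0)
          = (2*(ℓ:ℝ)+1) := by
        intro sb
        rw [Finset.sum_comm, Finset.sum_congr rfl (fun j _ => sum_delta (qcfg ℓ sb j) (1:ℝ)),
            Finset.sum_const, Finset.card_univ, Fintype.card_fin, nsmul_eq_mul]
        push_cast; ring
      rw [Finset.sum_add_distrib, Finset.sum_add_distrib, Finset.sum_add_distrib,
          ← Finset.mul_sum, ← Finset.mul_sum, ← Finset.mul_sum, ← Finset.mul_sum,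
          sum_delta, sum_delta, orbtot false, orbtot true]
      have hstot : c₀ + c₁ + c₂ = 1 := by
        have h' := hsum; rw [hsdef] at h'; linarith
      have hbsum2 : (b0+b1)*(2*(ℓ:ℝ)) = (2*(ℓ:ℝ)+1)*c₂ := by
        rw [hbsum]; field_simp
      rw [ha0def, ha1def]
      field_simp
      linear_combination (2*(ℓ:ℝ)+1)*hstot + hbsum2
    · intro x
      have hconst : ∀ b : Bool,
          ((x ∘ finRotate (2*ℓ+1)) = (fun _ => b)) ↔ (x = fun _ => b) := by
        intro b
        constructor
        · intro hh; funext i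
          have h1 := congrFun hh (i-1)
          simpa [finRotate_succ_apply, sub_add_cancel] using h1
        · intro hh; funext i
          simp [hh, finRotate_succ_apply]
      have horb : ∀ sb : Bool,
          (∑ j : Fin (2*ℓ+1), if x ∘ finRotate (2*ℓ+1) = qcfg ℓ sb j then (1:ℝ) else 0)
          = ∑ j : Fin (2*ℓ+1), if x = qcfg ℓ sb j then (1:ℝ) else 0 := by
        intro sb
        rw [Finset.sum_congr rfl (fun j _ => if_congr (qcfg_rot ℓ sb j x) rfl rfl)]
        exact Fintype.sum_equiv (Equiv.subRight (1 : Fin (2*ℓ+1))) _ _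
          (fun j => by simp [Equiv.subRight_apply])
      simp only [hconst]
      rw [horb false, horb true]
    · intro a ζ
      have hcsplit : ∀ x : Fin (2*ℓ+1) → Bool,
          (if (∀ t : Fin 2, x ((finRotate (2*ℓ+1))^[t] a) = ζ t) then
            (a0 * (if x = (fun _ => false) then 1 else 0)
            + a1 * (if x = (fun _ => true) then 1 else 0)
            + (b0/(2*(ℓ:ℝ)+1)) * (∑ j : Fin (2*ℓ+1), if x = qcfg ℓ false j then 1 else 0)
            + (b1/(2*(ℓ:ℝ)+1)) * (∑ j : Fin (2*ℓ+1), if x = qcfg ℓ true j then 1 else 0)) else 0)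
          = (if (x a = ζ 0 ∧ x (a+1) = ζ 1) then a0 * (if x = (fun _ => false) then 1 else 0) else 0)
            + (if (x a = ζ 0 ∧ x (a+1) = ζ 1) then a1 * (if x = (fun _ => true) then 1 else 0) else 0)
            + (if (x a = ζ 0 ∧ x (a+1) = ζ 1) then (b0/(2*(ℓ:ℝ)+1)) * (∑ j : Fin (2*ℓ+1), if x = qcfg ℓ false j then 1 else 0) else 0)
            + (if (x a = ζ 0 ∧ x (a+1) = ζ 1) then (b1/(2*(ℓ:ℝ)+1)) * (∑ j : Fin (2*ℓ+1), if x = qcfg ℓ true j then 1 else 0) else 0) := by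
        intro x
        rw [if_congr (hcond x a ζ) rfl rfl]
        split_ifs <;> simp
      rw [Finset.sum_congr rfl (fun x _ => hcsplit x), Finset.sum_add_distrib,
          Finset.sum_add_distrib, Finset.sum_add_distrib,
          sum_if_scaled, sum_if_scaled, sum_if_orbit, sum_if_orbit]
      have hcount : ∀ sb : Bool,
          (∑ j : Fin (2*ℓ+1), if (qcfg ℓ sb j a = ζ 0 ∧ qcfg ℓ sb j (a+1) = ζ 1) then (1:ℝ) else 0)
          = (if (xor sb (ζ 0) = false ∧ xor sb (ζ 1) = false) then 1 else 0)
            + (if xor sb (ζ 0) ≠ xor sb (ζ 1) then (ℓ:ℝ) else 0) := by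
        intro sb
        have step1 : ∀ j : Fin (2*ℓ+1),
            (if (qcfg ℓ sb j a = ζ 0 ∧ qcfg ℓ sb j (a+1) = ζ 1) then (1:ℝ) else 0)
            = (if (pat ℓ (a+j) = xor sb (ζ 0) ∧ pat ℓ ((a+j)+1) = xor sb (ζ 1)) then (1:ℝ) else 0) := by
          intro j
          apply if_congr _ rfl rfl
          have harg : a + 1 + j = (a + j) + 1 := by ring
          rw [qcfg, qcfg, harg]
          constructor
          · rintro ⟨u1, u2⟩
            refine ⟨?_, ?_⟩ <;> [rw [← u1]; rw [← u2]] <;> cases sb <;> simp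
          · rintro ⟨u1, u2⟩
            refine ⟨?_, ?_⟩ <;> [rw [u1]; rw [u2]] <;> cases sb <;> simp
        rw [Finset.sum_congr rfl (fun j _ => step1 j)]
        rw [Fintype.sum_equiv (Equiv.addLeft a)
          (fun j => if (pat ℓ (a+j) = xor sb (ζ 0) ∧ pat ℓ ((a+j)+1) = xor sb (ζ 1)) then (1:ℝ) else 0)
          (fun m => if (pat ℓ m = xor sb (ζ 0) ∧ pat ℓ (m+1) = xor sb (ζ 1)) then (1:ℝ) else 0)
          (fun j => by simp [Equiv.coe_addLeft]; rfl)]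
        exact count_pat ℓ (xor sb (ζ 0)) (xor sb (ζ 1))
      rw [hcount false, hcount true, hμ]
      have hF : (fun _ : Fin (2*ℓ+1) => false) a = false := rfl
      have hT : (fun _ : Fin (2*ℓ+1) => true) a = true := rfl
      have hbsum2 : (b0+b1)*(2*(ℓ:ℝ)) = (2*(ℓ:ℝ)+1)*c₂ := by
        rw [hbsum]; field_simp
      cases hz0 : ζ 0 <;> cases hz1 : ζ 1 <;> simp only [hz0, hz1] <;> norm_num
      · rw [ha0def]; ring
      · field_simp; linear_combination hbsum2
      · field_simp; linear_combination hbsum2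
      · rw [ha1def]; ring
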